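/- For nonnegative integers n, m, ℓ with ℓ ≤ n, the q-Chu–Vandermonde identity holds: qbinom(n+m, m)_q = Σ_{k=0}^{n-ℓ} qbinom(n-ℓ, k)_q · qbinom(m+ℓ, m-k)_q · q^{k(k+ℓ)}. -/

import Mathlib

open Finset Polynomial

/-- The Gaussian binomial coefficient, as a polynomial expression in `q`
(equal to `0` when the lower index exceeds the upper one). -/
def qbin {R : Type*} [CommRing R] (q : R) : ℕ → ℕ → R
  | 0, 0 => 1
  | 0, _ + 1 => 0
  | _ + 1, 0 => 1
  | n + 1, k + 1 => qbin q n k + q ^ (k + 1) * qbin q n (k + 1)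

lemma qbin_zero {R : Type*} [CommRing R] (q : R) (n : ℕ) : qbin q n 0 = 1 := by
  cases n <;> rfl

lemma qbin_eq_zero {R : Type*} [CommRing R] (q : R) : ∀ n k, n < k → qbin q n k = 0
  | 0, k+1, _ => rfl
  | n+1, k+1, h => by
      rw [qbin, qbin_eq_zero q n k (by omega), qbin_eq_zero q n (k+1) (by omega)]; ring

lemma qbin_self {R : Type*} [CommRing R] (q : R) : ∀ n, qbin q n n = 1
  | 0 => rfl
  | n+1 => by rw [qbin, qbin_self q n, qbin_eq_zero q n (n+1) (by omega)]; ring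

lemma qbin_succ_one {R : Type*} [CommRing R] (q : R) : ∀ n, qbin q (n+1) 1 = q^n + qbin q n 1
  | 0 => by simp [qbin]
  | n+1 => by
      conv_lhs => rw [show ((n:ℕ)+1+1) = (n+1)+1 from rfl, qbin, qbin_succ_one q n]
      conv_rhs => rw [show qbin q (n+1) 1 = qbin q n 0 + q^(0+1) * qbin q n 1 from by rw [qbin]]
      rw [qbin_zero, qbin_zero]
      ring

lemma qbin_pascal' {R : Type*} [CommRing R] (q : R) : ∀ n k, k ≤ n →
    qbin q (n+1) (k+1) = q^(n-k) * qbin q n k + qbin q n (k+1)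
  | 0, 0, _ => by simp [qbin]
  | n+1, 0, _ => by
      rw [qbin_succ_one q (n+1), qbin_zero]
      simp
  | n+1, j+1, h => by
      rcases eq_or_lt_of_le h with he | hlt
      · -- j + 1 = n + 1, top case
        rw [← he, qbin_self, qbin_eq_zero q (j+1) (j+2) (by omega),
            qbin_self, Nat.sub_self]
        ring
      · have hj : j ≤ n := by omega
        have hj1 : j + 1 ≤ n := by omega
        conv_lhs => rw [show ((n:ℕ)+1+1) = (n+1)+1 from rfl, qbin,
          qbin_pascal' q n j hj, qbin_pascal' q n (j+1) hj1]
        conv_rhs => rw [show qbin q (n+1) (j+1) = qbin q n j + q^(j+1) * qbin q n (j+1) from by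
            rw [qbin],
          show qbin q (n+1) (j+2) = qbin q n (j+1) + q^(j+2) * qbin q n (j+2) from by rw [qbin]]
        have h1 : q^(j+1+1) * q^(n-(j+1)) = q^(n+1-(j+1)) * q^(j+1) := by
          rw [← pow_add, ← pow_add]; congr 1; omega
        have h2 : (n+1) - (j+1) = n - j := by omega
        rw [h2] at h1 ⊢
        linear_combination qbin q n (j+1) * h1

lemma qvdm {R : Type*} [CommRing R] (q : R) : ∀ A, ∀ m B : ℕ, m ≤ B →
    qbin q (A + B) m = ∑ k ∈ Finset.range (A+1),
      qbin q A k * (if k ≤ m then qbin q B (m-k) else 0) * q^(k*(k+(B-m)))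
  | 0, m, B, hm => by
      rw [Finset.sum_range_one]
      simp [qbin_zero, show qbin q 0 0 = 1 from rfl]
  | A+1, 0, B, hm => by
      rw [qbin_zero, Finset.sum_eq_single 0]
      · simp [qbin_zero]
      · intro k _ hk0; rw [if_neg (by omega)]; ring
      · intro hh; exact absurd (Finset.mem_range.mpr (by omega)) hh
  | A+1, m'+1, B, hm => by
      have hm' : m' ≤ B := by omega
      rw [show A+1+B = (A+B)+1 by omega, qbin_pascal' q (A+B) m' (by omega),
          qvdm q A m' B hm', qvdm q A (m'+1) B hm]
      conv_rhs => rw [Finset.sum_range_succ']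
      have hterm : ∀ j ∈ Finset.range (A+1),
          qbin q (A+1) (j+1) * (if j+1 ≤ m'+1 then qbin q B (m'+1-(j+1)) else 0) *
            q^((j+1)*((j+1)+(B-(m'+1))))
          = q^((A+B)-m') * (qbin q A j * (if j ≤ m' then qbin q B (m'-j) else 0) *
              q^(j*(j+(B-m'))))
            + qbin q A (j+1) * (if j+1 ≤ m'+1 then qbin q B (m'+1-(j+1)) else 0) *
              q^((j+1)*((j+1)+(B-(m'+1)))) := by
        intro j hj
        have hjA : j ≤ A := by simpa using Nat.lt_succ_iff.mp (Finset.mem_range.mp hj)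
        have hg : (if j+1 ≤ m'+1 then qbin q B (m'+1-(j+1)) else 0)
            = (if j ≤ m' then qbin q B (m'-j) else 0) := by
          simp only [Nat.add_le_add_iff_right, Nat.succ_sub_succ]
        have hq : q^(A-j) * q^((j+1)*((j+1)+(B-(m'+1)))) = q^((A+B)-m') * q^(j*(j+(B-m'))) := by
          obtain ⟨c, rfl⟩ : ∃ c, B = m'+1+c := ⟨B-(m'+1), by omega⟩
          obtain ⟨d, rfl⟩ : ∃ d, A = j+d := ⟨A-j, by omega⟩
          rw [← pow_add, ← pow_add]
          congr 1
          have e1 : j+d-j = d := by omega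
          have e2 : m'+1+c-(m'+1) = c := by omega
          have e3 : j+d+(m'+1+c)-m' = j+d+c+1 := by omega
          have e4 : m'+1+c-m' = c+1 := by omega
          rw [e1, e2, e3, e4]; ring
        rw [qbin_pascal' q A j hjA, hg]
        linear_combination (qbin q A j * (if j ≤ m' then qbin q B (m'-j) else 0)) * hq
      rw [Finset.sum_congr rfl hterm, Finset.sum_add_distrib, ← Finset.mul_sum]
      have hlast : qbin q A (A+1) * (if A+1 ≤ m'+1 then qbin q B (m'+1-(A+1)) else 0) *
          q^((A+1)*((A+1)+(B-(m'+1)))) = 0 := by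
        rw [qbin_eq_zero q A (A+1) (by omega)]; ring
      have h0 : qbin q (A+1) 0 * (if 0 ≤ m'+1 then qbin q B (m'+1-0) else 0) *
          q^(0*(0+(B-(m'+1))))
          = qbin q A 0 * (if 0 ≤ m'+1 then qbin q B (m'+1-0) else 0) * q^(0*(0+(B-(m'+1)))) := by
        rw [qbin_zero, qbin_zero]
      have hS := Finset.sum_range_succ' (fun k => qbin q A k *
            (if k ≤ m'+1 then qbin q B (m'+1-k) else 0) * q^(k*(k+(B-(m'+1))))) (A+1)
      have hS2 := Finset.sum_range_succ (fun k => qbin q A k *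
            (if k ≤ m'+1 then qbin q B (m'+1-k) else 0) * q^(k*(k+(B-(m'+1))))) (A+1)
      linear_combination hS - hS2 - hlast - h0

/-- The q-Chu–Vandermonde identity; the factor `qbinom(m+ℓ, m-k)_q` vanishes when `m - k < 0`,
which is expressed by the `if k ≤ m` guard. -/
theorem stmt17 (n m ℓ : ℕ) (h : ℓ ≤ n) :
    qbin (X : Polynomial ℤ) (n + m) m =
      ∑ k ∈ Finset.range (n - ℓ + 1),
        qbin (X : Polynomial ℤ) (n - ℓ) k *
          (if k ≤ m then qbin (X : Polynomial ℤ) (m + ℓ) (m - k) else 0) *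
          X ^ (k * (k + ℓ)) := by
  have key := qvdm (X : Polynomial ℤ) (n - ℓ) m (m + ℓ) (by omega)
  rw [show n - ℓ + (m + ℓ) = n + m by omega, show m + ℓ - m = ℓ by omega] at key
  exact key
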